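/- Let L be the free Lie algebra over a field k of characteristic zero on two generators x and y. If z ∈ L satisfies [z,x] = 0 and [z,y] = 0, then z = 0. In particular, the center of the free Lie algebra on two generators is trivial. -/

import Mathlib

set_option linter.unusedSectionVars false

noncomputable section Stmt3Aux

open FreeLieAlgebra

attribute [local instance] LieRing.ofAssociativeRing

variable (k : Type*) [Field k] [CharZero k]

local notation "L2" => FreeLieAlgebra k (Fin 2)
local notation "A2" => FreeAlgebra k (Fin 2)

/-- The canonical Lie algebra morphism into the free associative algebra. -/
def stmt3φ : L2 →ₗ⁅k⁆ A2 := FreeLieAlgebra.lift k (FreeAlgebra.ι k)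

@[simp] lemma stmt3φ_of (i : Fin 2) : stmt3φ k (of k i) = FreeAlgebra.ι k i := by
  simp [stmt3φ]

/-- Right-nested bracketing of a word. -/
def stmt3β : List (Fin 2) → L2
  | [] => 0
  | [i] => of k i
  | i :: j :: l => ⁅of k i, stmt3β (j :: l)⁆

lemma stmt3β_cons (i : Fin 2) (l : List (Fin 2)) (h : l ≠ []) :
    stmt3β k (i :: l) = ⁅of k i, stmt3β k l⁆ := by
  cases l with
  | nil => exact absurd rfl h
  | cons j t => rfl

def stmt3G : FreeAlgebra k (Fin 2) ≃ₐ[k] MonoidAlgebra k (FreeMonoid (Fin 2)) :=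
  FreeAlgebra.equivMonoidAlgebraFreeMonoid

lemma stmt3_basis_apply (w : FreeMonoid (Fin 2)) :
    FreeAlgebra.basisFreeMonoid k (Fin 2) w = (stmt3G k).symm (MonoidAlgebra.single w 1) := by
  simp [FreeAlgebra.basisFreeMonoid, stmt3G]

@[simp] lemma stmt3G_ι (i : Fin 2) :
    stmt3G k (FreeAlgebra.ι k i) = MonoidAlgebra.single (FreeMonoid.of i) 1 := by
  simp [stmt3G, FreeAlgebra.equivMonoidAlgebraFreeMonoid]

lemma stmt3_basis_one : FreeAlgebra.basisFreeMonoid k (Fin 2) 1 = 1 := by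
  rw [stmt3_basis_apply]
  exact map_one (stmt3G k).symm

lemma stmt3_basis_of_mul (i : Fin 2) (w : FreeMonoid (Fin 2)) :
    FreeAlgebra.basisFreeMonoid k (Fin 2) (FreeMonoid.of i * w)
      = FreeAlgebra.ι k i * FreeAlgebra.basisFreeMonoid k (Fin 2) w := by
  rw [stmt3_basis_apply, stmt3_basis_apply]
  have : FreeAlgebra.ι k i = (stmt3G k).symm (MonoidAlgebra.single (FreeMonoid.of i) 1) := by
    rw [← stmt3G_ι]; exact ((stmt3G k).symm_apply_apply _).symm
  rw [this, ← map_mul]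
  congr 1
  rw [MonoidAlgebra.single_mul_single, one_mul]

/-- The Dynkin–Specht–Wever bracketing map. -/
def stmt3δ : A2 →ₗ[k] L2 :=
  (FreeAlgebra.basisFreeMonoid k (Fin 2)).constr k
    (fun w => stmt3β k (FreeMonoid.toList w))

@[simp] lemma stmt3δ_basis (w : FreeMonoid (Fin 2)) :
    stmt3δ k (FreeAlgebra.basisFreeMonoid k (Fin 2) w) = stmt3β k (FreeMonoid.toList w) :=
  Module.Basis.constr_basis _ _ _ _

@[simp] lemma stmt3δ_one : stmt3δ k (1 : A2) = 0 := by
  rw [← stmt3_basis_one, stmt3δ_basis]; rfl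

@[simp] lemma stmt3δ_ι (i : Fin 2) : stmt3δ k (FreeAlgebra.ι k i) = of k i := by
  have hb : FreeAlgebra.basisFreeMonoid k (Fin 2) (FreeMonoid.of i) = FreeAlgebra.ι k i := by
    rw [show FreeMonoid.of i = FreeMonoid.of i * 1 from (mul_one _).symm,
      stmt3_basis_of_mul, stmt3_basis_one, mul_one]
  have h := stmt3δ_basis k (FreeMonoid.of i)
  rw [hb] at h
  exact h

/-- The augmentation. -/
def stmt3ε : FreeAlgebra k (Fin 2) →ₐ[k] k := FreeAlgebra.algebraMapInv

@[simp] lemma stmt3ε_ι (i : Fin 2) : stmt3ε k (FreeAlgebra.ι k i) = 0 := by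
  simp [stmt3ε, FreeAlgebra.algebraMapInv]

lemma stmt3ε_basis (w : FreeMonoid (Fin 2)) (h : w ≠ 1) :
    stmt3ε k (FreeAlgebra.basisFreeMonoid k (Fin 2) w) = 0 := by
  induction w using FreeMonoid.recOn with
  | one => exact absurd rfl h
  | of_mul i ys _ =>
      rw [stmt3_basis_of_mul, map_mul, stmt3ε_ι, zero_mul]

lemma stmt3_of_mul_ne_one (j : Fin 2) (ys : FreeMonoid (Fin 2)) :
    FreeMonoid.of j * ys ≠ 1 := by
  intro h
  have := congrArg FreeMonoid.toList h
  rw [FreeMonoid.toList_of_mul, FreeMonoid.toList_one] at this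
  exact List.cons_ne_nil _ _ this

lemma stmt3_dynkin_ι (i : Fin 2) (a : FreeAlgebra k (Fin 2)) :
    stmt3δ k (FreeAlgebra.ι k i * a)
      = ⁅of k i, stmt3δ k a⁆ + stmt3ε k a • of k i := by
  have key : (stmt3δ k).comp (LinearMap.mulLeft k (FreeAlgebra.ι k i))
      = ((LieAlgebra.ad k L2) (of k i)).comp (stmt3δ k)
        + (stmt3ε k).toLinearMap.smulRight (of k i) := by
    apply (FreeAlgebra.basisFreeMonoid k (Fin 2)).ext
    intro w
    simp only [LinearMap.comp_apply, LinearMap.mulLeft_apply, LinearMap.add_apply,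
      LinearMap.smulRight_apply, AlgHom.toLinearMap_apply, LieAlgebra.ad_apply]
    rw [← stmt3_basis_of_mul, stmt3δ_basis, stmt3δ_basis]
    induction w using FreeMonoid.recOn with
    | one =>
        rw [mul_one, stmt3_basis_one]
        rw [show ((1 : FreeAlgebra k (Fin 2)) = algebraMap k _ 1) by rw [map_one],
          AlgHom.commutes]
        show stmt3β k (FreeMonoid.toList (FreeMonoid.of i))
          = ⁅of k i, stmt3β k (FreeMonoid.toList (1 : FreeMonoid (Fin 2)))⁆
            + (algebraMap k k) 1 • of k i
        rw [FreeMonoid.toList_of, FreeMonoid.toList_one]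
        show of k i = ⁅of k i, (0 : FreeLieAlgebra k (Fin 2))⁆ + (algebraMap k k) 1 • of k i
        rw [lie_zero, zero_add, map_one, one_smul]
    | of_mul j ys _ =>
        rw [stmt3ε_basis k _ (stmt3_of_mul_ne_one j ys), zero_smul, add_zero,
          FreeMonoid.toList_of_mul, FreeMonoid.toList_of_mul,
          stmt3β_cons k i _ (List.cons_ne_nil _ _)]
  have := LinearMap.congr_fun key a
  simpa using this

lemma stmt3_span :
    LieSubalgebra.lieSpan k (FreeLieAlgebra k (Fin 2)) (Set.range (of k)) = ⊤ := by
  set S := LieSubalgebra.lieSpan k (FreeLieAlgebra k (Fin 2)) (Set.range (of k)) with hS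
  rw [eq_top_iff]
  intro z _
  let F : FreeLieAlgebra k (Fin 2) →ₗ⁅k⁆ S :=
    FreeLieAlgebra.lift k fun i => ⟨of k i, LieSubalgebra.subset_lieSpan ⟨i, rfl⟩⟩
  have h : S.incl.comp F = LieHom.id := by
    apply FreeLieAlgebra.hom_ext
    intro i
    simp [F]
  have : S.incl (F z) = z := by
    have := DFunLike.congr_fun h z
    simpa using this
  rw [← this]
  exact (F z).2

lemma stmt3εφ (u : FreeLieAlgebra k (Fin 2)) : stmt3ε k (stmt3φ k u) = 0 := by
  have h : ((stmt3ε k).toLieHom.comp (stmt3φ k))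
      = (0 : FreeLieAlgebra k (Fin 2) →ₗ⁅k⁆ k) := by
    apply FreeLieAlgebra.hom_ext
    intro i
    simp
  have := DFunLike.congr_fun h u
  simpa using this

lemma stmt3_dynkin (u : FreeLieAlgebra k (Fin 2)) (a : FreeAlgebra k (Fin 2)) :
    stmt3δ k (stmt3φ k u * a)
      = ⁅u, stmt3δ k a⁆ + stmt3ε k a • stmt3δ k (stmt3φ k u) := by
  let S : LieSubalgebra k (FreeLieAlgebra k (Fin 2)) :=
    { carrier := {u | ∀ a, stmt3δ k (stmt3φ k u * a)
        = ⁅u, stmt3δ k a⁆ + stmt3ε k a • stmt3δ k (stmt3φ k u)}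
      add_mem' := by
        intro p q hp hq a
        simp only [Set.mem_setOf_eq] at hp hq ⊢
        rw [map_add (stmt3φ k) p q, add_mul, map_add, hp a, hq a, map_add, add_lie, smul_add]
        abel
      zero_mem' := by
        intro a
        simp
      smul_mem' := by
        intro c p hp a
        simp only [Set.mem_setOf_eq] at hp ⊢
        rw [map_smul (stmt3φ k) c p, smul_mul_assoc, map_smul, hp a, map_smul, smul_lie, smul_add,
          smul_comm (stmt3ε k a) c]
      lie_mem' := by
        intro p q hp hq a
        simp only [Set.mem_setOf_eq] at hp hq ⊢
        have h1 : stmt3φ k ⁅p, q⁆ = stmt3φ k p * stmt3φ k q - stmt3φ k q * stmt3φ k p := by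
          rw [LieHom.map_lie, Ring.lie_def]
        rw [h1, sub_mul, map_sub, mul_assoc, mul_assoc, hp (stmt3φ k q * a),
          hq (stmt3φ k p * a), hp a, hq a, map_sub, hp (stmt3φ k q), hq (stmt3φ k p),
          map_mul, map_mul]
        simp only [stmt3εφ, zero_mul, zero_smul, add_zero, lie_add, lie_smul, LieAlgebra.lie_smul, smul_sub, lie_lie]
        abel }
  have hle : LieSubalgebra.lieSpan k (FreeLieAlgebra k (Fin 2)) (Set.range (of k)) ≤ S := by
    rw [LieSubalgebra.lieSpan_le]
    rintro _ ⟨i, rfl⟩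
    exact fun a => by rw [stmt3φ_of, stmt3δ_ι]; exact stmt3_dynkin_ι k i a
  rw [stmt3_span] at hle
  have hu : u ∈ S := hle (LieSubalgebra.mem_top u)
  exact hu a

/-- The Euler operator. -/
def stmt3E : FreeLieAlgebra k (Fin 2) →ₗ[k] FreeLieAlgebra k (Fin 2) :=
  (stmt3δ k).comp (stmt3φ k).toLinearMap

@[simp] lemma stmt3E_apply (u : FreeLieAlgebra k (Fin 2)) :
    stmt3E k u = stmt3δ k (stmt3φ k u) := rfl

@[simp] lemma stmt3E_of (i : Fin 2) : stmt3E k (of k i) = of k i := by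
  rw [stmt3E_apply, stmt3φ_of, stmt3δ_ι]

lemma stmt3E_lie (u v : FreeLieAlgebra k (Fin 2)) :
    stmt3E k ⁅u, v⁆ = ⁅stmt3E k u, v⁆ + ⁅u, stmt3E k v⁆ := by
  have h1 : stmt3φ k ⁅u, v⁆ = stmt3φ k u * stmt3φ k v - stmt3φ k v * stmt3φ k u := by
    rw [LieHom.map_lie, Ring.lie_def]
  simp only [stmt3E_apply, h1, map_sub]
  rw [stmt3_dynkin k u (stmt3φ k v), stmt3_dynkin k v (stmt3φ k u)]
  simp only [stmt3εφ, zero_smul, add_zero]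
  rw [show ⁅stmt3δ k (stmt3φ k u), v⁆ = -⁅v, stmt3δ k (stmt3φ k u)⁆ from
    (lie_skew _ _).symm]
  abel

lemma stmt3_top_le_sup :
    (⊤ : Submodule k (FreeLieAlgebra k (Fin 2))) ≤
      ⨆ p : {n : ℕ // 0 < n}, Module.End.eigenspace (stmt3E k) ((p : ℕ) : k) := by
  set W : Submodule k (FreeLieAlgebra k (Fin 2)) :=
    ⨆ p : {n : ℕ // 0 < n}, Module.End.eigenspace (stmt3E k) ((p : ℕ) : k) with hW
  have hbrk : ∀ (m n : {n : ℕ // 0 < n}) (x y : FreeLieAlgebra k (Fin 2)),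
      x ∈ Module.End.eigenspace (stmt3E k) ((m : ℕ) : k) →
      y ∈ Module.End.eigenspace (stmt3E k) ((n : ℕ) : k) →
      ⁅x, y⁆ ∈ Module.End.eigenspace (stmt3E k) (((m : ℕ) + (n : ℕ) : ℕ) : k) := by
    intro m n x y hx hy
    rw [Module.End.mem_eigenspace_iff] at hx hy ⊢
    rw [stmt3E_lie, hx, hy, smul_lie, LieAlgebra.lie_smul]
    push_cast
    rw [add_smul]
  have hlie : ∀ x, x ∈ W → ∀ y, y ∈ W → ⁅x, y⁆ ∈ W := by
    intro x hx
    refine Submodule.iSup_induction (motive := fun x => ∀ y, y ∈ W → ⁅x, y⁆ ∈ W) _ hx ?_ ?_ ?_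
    · intro m x hx y hy
      refine Submodule.iSup_induction (motive := fun y => ⁅x, y⁆ ∈ W) _ hy ?_ ?_ ?_
      · intro n y hy
        exact Submodule.mem_iSup_of_mem ⟨(m : ℕ) + (n : ℕ), Nat.add_pos_left m.2 _⟩
          (hbrk m n x y hx hy)
      · show ⁅x, (0:FreeLieAlgebra k (Fin 2))⁆ ∈ W
        rw [lie_zero]; exact W.zero_mem
      · intro y₁ y₂ h1 h2
        rw [lie_add]; exact W.add_mem h1 h2
    · intro y hy
      show ⁅(0:FreeLieAlgebra k (Fin 2)), y⁆ ∈ W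
      rw [zero_lie]; exact W.zero_mem
    · intro x₁ x₂ h1 h2 y hy
      rw [add_lie]; exact W.add_mem (h1 y hy) (h2 y hy)
  let S : LieSubalgebra k (FreeLieAlgebra k (Fin 2)) :=
    { toSubmodule := W
      lie_mem' := fun {x y} hx hy => hlie x hx y hy }
  have hle : LieSubalgebra.lieSpan k (FreeLieAlgebra k (Fin 2)) (Set.range (of k)) ≤ S := by
    rw [LieSubalgebra.lieSpan_le]
    rintro _ ⟨i, rfl⟩
    show of k i ∈ W
    refine Submodule.mem_iSup_of_mem ⟨1, one_pos⟩ ?_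
    rw [Module.End.mem_eigenspace_iff, stmt3E_of]
    norm_num
  rw [stmt3_span] at hle
  intro z _
  exact hle (LieSubalgebra.mem_top z)

lemma stmt3_central_eq_zero (u : FreeAlgebra k (Fin 2))
    (hc : ∀ i : Fin 2, u * FreeAlgebra.ι k i = FreeAlgebra.ι k i * u)
    (hε : stmt3ε k u = 0) : u = 0 := by
  set f : MonoidAlgebra k (FreeMonoid (Fin 2)) := stmt3G k u with hf
  have hcomm : ∀ i : Fin 2,
      f * MonoidAlgebra.single (FreeMonoid.of i) (1 : k)
        = MonoidAlgebra.single (FreeMonoid.of i) (1 : k) * f := by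
    intro i
    have := congrArg (stmt3G k) (hc i)
    rwa [map_mul, map_mul, stmt3G_ι] at this
  have hv : ∀ v : FreeMonoid (Fin 2), v ≠ 1 → f.coeff v = 0 := by
    intro v hv1
    have hl : FreeMonoid.toList v ≠ [] := by
      intro h
      apply hv1
      have := congrArg FreeMonoid.ofList h
      simpa using this
    obtain ⟨ℓ, hℓ⟩ : ∃ ℓ, (FreeMonoid.toList v).getLast? = some ℓ := by
      cases h : (FreeMonoid.toList v).getLast? with
      | none => exact absurd (List.getLast?_eq_none_iff.mp h) hl
      | some a => exact ⟨a, rfl⟩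
    set g : Fin 2 := if ℓ = 0 then 1 else 0 with hgdef
    have hgℓ : g ≠ ℓ := by
      by_cases h : ℓ = 0
      · rw [hgdef, if_pos h, h]; decide
      · rw [hgdef, if_neg h]; exact fun hh => h hh.symm
    have hR : (MonoidAlgebra.single (FreeMonoid.of g) (1 : k) * f).coeff (FreeMonoid.of g * v)
        = f.coeff v := by
      rw [MonoidAlgebra.coeff_single_mul_eq_mul_coeff v (fun a _ => ?_), one_mul]
      exact ⟨fun h => mul_left_cancel h, fun h => by rw [h]⟩
    have hL : (f * MonoidAlgebra.single (FreeMonoid.of g) (1 : k)).coeff (FreeMonoid.of g * v)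
        = 0 := by
      apply MonoidAlgebra.mul_single_apply_of_not_exists_mul
      rintro ⟨d, hd⟩
      have h1 : [g] ++ FreeMonoid.toList v = FreeMonoid.toList d ++ [g] := by
        have := congrArg FreeMonoid.toList hd
        simpa [FreeMonoid.toList_of_mul] using this
      have h2 : ([g] ++ FreeMonoid.toList v).getLast? = some ℓ := by
        rw [List.getLast?_append_of_ne_nil _ hl, hℓ]
      rw [h1, List.getLast?_concat] at h2
      exact hgℓ (Option.some_injective _ h2)
    rw [← hR, ← hcomm g, hL]
  have hsingle : f = MonoidAlgebra.single (1 : FreeMonoid (Fin 2)) (f.coeff 1) := by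
    ext v
    by_cases h : v = 1
    · subst h; rw [MonoidAlgebra.coeff_single, Finsupp.single_eq_same]
    · rw [hv v h, MonoidAlgebra.coeff_single, Finsupp.single_eq_of_ne h]
  have h4 : stmt3G k (algebraMap k (FreeAlgebra k (Fin 2)) (f.coeff 1)) = f := by
    rw [AlgEquiv.commutes, MonoidAlgebra.coe_algebraMap]
    simp only [Function.comp_apply, Algebra.algebraMap_self_apply]
    exact hsingle.symm
  have hu : u = algebraMap k (FreeAlgebra k (Fin 2)) (f.coeff 1) := by
    calc u = (stmt3G k).symm f := by rw [hf, AlgEquiv.symm_apply_apply]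
    _ = algebraMap k (FreeAlgebra k (Fin 2)) (f.coeff 1) :=
        ((stmt3G k).symm_apply_eq).mpr h4.symm
  have hf1 : f.coeff 1 = 0 := by
    have h5 := congrArg (stmt3ε k) hu
    rw [hε, AlgHom.commutes, Algebra.algebraMap_self_apply] at h5
    exact h5.symm
  rw [hu, hf1, map_zero]

end Stmt3Aux

/-- In the free Lie algebra on two generators over a field of
characteristic zero, any element commuting with both generators is zero; in
particular the center of the free Lie algebra on two generators is trivial. -/
theorem stmt3 (k : Type*) [Field k] [CharZero k]
    (z : FreeLieAlgebra k (Fin 2))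
    (hzx : ⁅z, FreeLieAlgebra.of k (0 : Fin 2)⁆ = 0)
    (hzy : ⁅z, FreeLieAlgebra.of k (1 : Fin 2)⁆ = 0) :
    z = 0 := by
  letI : LieRing (FreeAlgebra k (Fin 2)) := LieRing.ofAssociativeRing
  have hcomm : ∀ i : Fin 2,
      stmt3φ k z * FreeAlgebra.ι k i = FreeAlgebra.ι k i * stmt3φ k z := by
    intro i
    have hz : ⁅z, FreeLieAlgebra.of k i⁆ = 0 := by
      fin_cases i
      · exact hzx
      · exact hzy
    have := congrArg (stmt3φ k) hz
    rw [LieHom.map_lie, stmt3φ_of, map_zero, Ring.lie_def] at this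
    exact sub_eq_zero.mp this
  have hu0 : stmt3φ k z = 0 :=
    stmt3_central_eq_zero k (stmt3φ k z) hcomm (stmt3εφ k z)
  have hE0 : stmt3E k z = 0 := by
    rw [stmt3E_apply, hu0, map_zero]
  have h0 : z ∈ Module.End.eigenspace (stmt3E k) (0 : k) := by
    rw [Module.End.mem_eigenspace_iff, hE0, zero_smul]
  have hW : z ∈ ⨆ (μ : k) (_ : μ ≠ 0), Module.End.eigenspace (stmt3E k) μ := by
    have hz : z ∈ (⊤ : Submodule k (FreeLieAlgebra k (Fin 2))) := trivial
    have := stmt3_top_le_sup k hz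
    refine (iSup_le fun p => ?_ : _ ≤ ⨆ (μ : k) (_ : μ ≠ 0),
      Module.End.eigenspace (stmt3E k) μ) this
    exact le_iSup_of_le ((p : ℕ) : k)
      (le_iSup_of_le (Nat.cast_ne_zero.mpr p.2.ne') le_rfl)
  have hdisj := (Module.End.eigenspaces_iSupIndep (stmt3E k)) (0 : k)
  have : z ∈ (⊥ : Submodule k (FreeLieAlgebra k (Fin 2))) :=
    hdisj.le_bot (Submodule.mem_inf.mpr ⟨h0, hW⟩)
  simpa using this
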